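/- Let m ≥ 1, let S ⊆ [m] with |S| ≥ 2, and let i ∈ S. Then Σ_π (−1)^{m − l(π)} = 0, where the sum is over all flags π of subsets of [m] such that S ∈ π and S is the minimal member of π containing i. -/

import Mathlib

open scoped Classical

/-- A flag of subsets of `[m]`: a finite set of nonempty subsets of `Fin m`, totally
ordered by inclusion, containing the full set `[m]`.  Its length is `π.card`. -/
def IsFlag (m : ℕ) (π : Finset (Finset (Fin m))) : Prop :=
  (∀ S ∈ π, S.Nonempty) ∧ Finset.univ ∈ π ∧ ∀ S ∈ π, ∀ T ∈ π, S ⊆ T ∨ T ⊆ S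

lemma flag_card_le (m : ℕ) (π : Finset (Finset (Fin m))) (h : IsFlag m π) :
    π.card ≤ m := by
  obtain ⟨hne, huniv, hchain⟩ := h
  have : π.card ≤ (Finset.Icc 1 m).card := by
    apply Finset.card_le_card_of_injOn Finset.card
    · intro T hT
      simp only [Finset.mem_coe, Finset.mem_Icc]
      exact ⟨Finset.card_pos.2 (hne T hT), by
        simpa using Finset.card_le_univ T⟩
    · intro T hT T' hT' hc
      rcases hchain T hT T' hT' with h1 | h1
      · exact Finset.eq_of_subset_of_card_le h1 (le_of_eq hc.symm)
      · exact (Finset.eq_of_subset_of_card_le h1 (le_of_eq hc)).symm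
  simpa using this

/-- For `S ⊆ [m]` with `|S| ≥ 2` and `i ∈ S`, the signed count `∑_π (-1)^{m - l(π)}`
over all flags `π` of subsets of `[m]` such that `S ∈ π` and `S` is the minimal
member of `π` containing `i` vanishes. -/
theorem flags_minimal_member_vanishing (m : ℕ) (hm : 1 ≤ m) (S : Finset (Fin m))
    (hS : 2 ≤ S.card) (i : Fin m) (hi : i ∈ S) :
    ∑ π ∈ Finset.univ.filter
        (fun π => IsFlag m π ∧ S ∈ π ∧ ∀ T ∈ π, i ∈ T → S ⊆ T),
      (-1 : ℤ) ^ (m - π.card) = 0 := by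
  set A : Finset (Fin m) := S.erase i with hA
  have hiA : i ∉ A := Finset.notMem_erase i S
  have hAne : A.Nonempty := by
    rw [← Finset.card_pos, Finset.card_erase_of_mem hi]
    omega
  have hAS : A ≠ S := fun h => hiA (h ▸ hi)
  have hAsub : A ⊆ S := Finset.erase_subset i S
  have hAuniv : A ≠ Finset.univ := fun h => hiA (h ▸ Finset.mem_univ i)
  set P : Finset (Finset (Fin m)) → Prop :=
    fun π => IsFlag m π ∧ S ∈ π ∧ ∀ T ∈ π, i ∈ T → S ⊆ T with hP
  -- the toggled flag satisfies P
  have key : ∀ π, P π →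
      P (if A ∈ π then π.erase A else insert A π) := by
    intro π ⟨⟨hne, huniv, hchain⟩, hSπ, hmin⟩
    by_cases hAπ : A ∈ π
    · simp only [if_pos hAπ]
      refine ⟨⟨fun T hT => hne T (Finset.mem_of_mem_erase hT),
        Finset.mem_erase.2 ⟨hAuniv.symm, huniv⟩,
        fun T hT T' hT' => hchain T (Finset.mem_of_mem_erase hT) T'
          (Finset.mem_of_mem_erase hT')⟩,
        Finset.mem_erase.2 ⟨fun h => hAS h.symm, hSπ⟩,
        fun T hT hiT => hmin T (Finset.mem_of_mem_erase hT) hiT⟩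
    · simp only [if_neg hAπ]
      have hcomp : ∀ T ∈ π, A ⊆ T ∨ T ⊆ A := by
        intro T hT
        rcases hchain S hSπ T hT with h1 | h1
        · exact Or.inl (hAsub.trans h1)
        · by_cases hiT : i ∈ T
          · have := hmin T hT hiT
            exact Or.inl (hAsub.trans this)
          · right
            intro x hx
            exact Finset.mem_erase.2 ⟨fun h => hiT (h ▸ hx), h1 hx⟩
      refine ⟨⟨?_, Finset.mem_insert_of_mem huniv, ?_⟩,
        Finset.mem_insert_of_mem hSπ, ?_⟩
      · intro T hT
        rcases Finset.mem_insert.1 hT with h | h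
        · exact h ▸ hAne
        · exact hne T h
      · intro T hT T' hT'
        rcases Finset.mem_insert.1 hT with h | h <;>
          rcases Finset.mem_insert.1 hT' with h' | h'
        · subst h; subst h'; exact Or.inl (subset_refl _)
        · subst h; exact hcomp T' h'
        · subst h'; exact (hcomp T h).symm
        · exact hchain T h T' h'
      · intro T hT hiT
        rcases Finset.mem_insert.1 hT with h | h
        · exact absurd (h ▸ hiT) hiA
        · exact hmin T h hiT
  set s := Finset.univ.filter P with hs
  have hmem : ∀ π ∈ s, (if A ∈ π then π.erase A else insert A π) ∈ s := by
    intro π hπ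
    exact Finset.mem_filter.2 ⟨Finset.mem_univ _, key π (Finset.mem_filter.1 hπ).2⟩
  have hsum : ∀ π ∈ s, (-1 : ℤ) ^ (m - π.card) +
      (-1 : ℤ) ^ (m - (if A ∈ π then π.erase A else insert A π).card) = 0 := by
    intro π hπ
    have hPπ : P π := (Finset.mem_filter.1 hπ).2
    have hcard : π.card ≤ m := flag_card_le m π hPπ.1
    by_cases hAπ : A ∈ π
    · simp only [if_pos hAπ]
      rw [Finset.card_erase_of_mem hAπ]
      have h1 : 1 ≤ π.card := Finset.card_pos.2 ⟨A, hAπ⟩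
      have : m - (π.card - 1) = (m - π.card) + 1 := by omega
      rw [this, pow_succ]
      ring
    · simp only [if_neg hAπ]
      rw [Finset.card_insert_of_notMem hAπ]
      have hc2 : (insert A π).card ≤ m := by
        have h := key π hPπ
        rw [if_neg hAπ] at h
        exact flag_card_le m _ h.1
      rw [Finset.card_insert_of_notMem hAπ] at hc2
      have : m - π.card = (m - (π.card + 1)) + 1 := by omega
      rw [this, pow_succ]
      ring
  have hne : ∀ π ∈ s, ((-1 : ℤ) ^ (m - π.card) ≠ 0) →
      (if A ∈ π then π.erase A else insert A π) ≠ π := by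
    intro π hπ _
    by_cases hAπ : A ∈ π
    · simp only [if_pos hAπ]
      intro h
      rw [← h] at hAπ
      exact Finset.notMem_erase A π hAπ
    · simp only [if_neg hAπ]
      intro h
      exact hAπ (h ▸ Finset.mem_insert_self A π)
  have hinv : ∀ π ∈ s,
      (if A ∈ (if A ∈ π then π.erase A else insert A π) then
        (if A ∈ π then π.erase A else insert A π).erase A
      else insert A (if A ∈ π then π.erase A else insert A π)) = π := by
    intro π hπ
    by_cases hAπ : A ∈ π
    · rw [if_pos hAπ, if_neg (Finset.notMem_erase A π), Finset.insert_erase hAπ]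
    · rw [if_neg hAπ, if_pos (Finset.mem_insert_self A π), Finset.erase_insert hAπ]
  exact Finset.sum_involution (fun π _ => if A ∈ π then π.erase A else insert A π)
    hsum hne hmem (fun π hπ => hinv π hπ)
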